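/- Let τ≥0, n∈ℕ, and let β be a function of class KL such that β(r,0)≥r for all r≥0. Then there exists a function β̃ of class KL with β(r,t) ≤ β̃(r,t) for all r,t≥0, such that for every t0≥0, every c≥0, every d≥0 and every continuous function x:[t0−τ,∞)→ℝⁿ satisfying |x(t)| ≤ c for all t∈[t0−τ,t0] and |x(t)| ≤ β(c, t−t0)+d for all t≥t0, it holds that sup over s∈[−τ,0] of |x(t+s)| ≤ β̃(c, t−t0)+d for all t≥t0. (This is the key step in the proof of Proposition 4.2, showing that a pointwise KL estimate on a solution of a time-delay system yields a KL estimate on the sup-norm of the state segment x_t.) -/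

import Mathlib

open Set Filter

/-- A function of class `K`. -/
def ClassK (α : ℝ → ℝ) : Prop :=
  ContinuousOn α (Ici 0) ∧ StrictMonoOn α (Ici 0) ∧ α 0 = 0

/-- A function of class `KL`. -/
def ClassKL (β : ℝ → ℝ → ℝ) : Prop :=
  (∀ t ≥ (0:ℝ), ClassK (fun r => β r t)) ∧
  (∀ r ≥ (0:ℝ), AntitoneOn (fun t => β r t) (Ici 0) ∧
    Tendsto (fun t => β r t) atTop (nhds 0))

/-- Key step in the proof of Proposition 4.2: a pointwise KL estimate on a solution of a
time-delay system yields a KL estimate (with a possibly larger KL function `β̃ ≥ β`) on the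
supremum norm of the state segment `x_t`. -/
theorem pointwise_KL_to_segment_KL (τ : ℝ) (hτ : 0 ≤ τ) (n : ℕ)
    (β : ℝ → ℝ → ℝ) (hβ : ClassKL β) (hβ0 : ∀ r ≥ (0:ℝ), r ≤ β r 0) :
    ∃ β' : ℝ → ℝ → ℝ, ClassKL β' ∧
      (∀ r ≥ (0:ℝ), ∀ t ≥ (0:ℝ), β r t ≤ β' r t) ∧
      ∀ t0 ≥ (0:ℝ), ∀ c ≥ (0:ℝ), ∀ d ≥ (0:ℝ),
        ∀ x : ℝ → EuclideanSpace ℝ (Fin n),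
          ContinuousOn x (Ici (t0 - τ)) →
          (∀ t ∈ Icc (t0 - τ) t0, ‖x t‖ ≤ c) →
          (∀ t ≥ t0, ‖x t‖ ≤ β c (t - t0) + d) →
          ∀ t ≥ t0, ∀ s ∈ Icc (-τ) (0:ℝ), ‖x (t + s)‖ ≤ β' c (t - t0) + d := by

  obtain ⟨hK, hL⟩ := hβ
  refine ⟨fun r t => β r (max (t - τ) 0), ⟨?_, ?_⟩, ?_, ?_⟩
  · intro t _
    exact hK _ (le_max_right _ _)
  · intro r hr
    refine ⟨?_, ?_⟩
    · intro a _ b _ hab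
      exact (hL r hr).1 (mem_Ici.mpr (le_max_right _ _)) (mem_Ici.mpr (le_max_right _ _))
        (max_le_max (by linarith) le_rfl)
    · refine (hL r hr).2.comp (tendsto_atTop_mono (fun t => le_max_left (t - τ) 0) ?_)
      simpa [sub_eq_add_neg] using tendsto_atTop_add_const_right atTop (-τ) tendsto_id
  · intro r hr t ht
    exact (hL r hr).1 (mem_Ici.mpr (le_max_right _ _)) (mem_Ici.mpr ht) (max_le (by linarith) ht)
  · intro t0 ht0 c hc d hd x hx hIc hBd t ht s hs
    rcases le_total (t + s) t0 with h | h
    · have h1 : ‖x (t + s)‖ ≤ c := hIc (t + s) ⟨by linarith [hs.1], h⟩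
      have hmax : max (t - t0 - τ) 0 = 0 := max_eq_right (by linarith [hs.1])
      calc ‖x (t + s)‖ ≤ c := h1
        _ ≤ β c 0 := hβ0 c hc
        _ ≤ β c (max (t - t0 - τ) 0) + d := by rw [hmax]; linarith
    · have h1 := hBd (t + s) h
      have h2 : β c (t + s - t0) ≤ β c (max (t - t0 - τ) 0) :=
        (hL c hc).1 (mem_Ici.mpr (le_max_right _ _)) (mem_Ici.mpr (by linarith)) (max_le (by linarith [hs.1]) (by linarith))
      calc ‖x (t + s)‖ ≤ β c (t + s - t0) + d := h1
        _ ≤ β c (max (t - t0 - τ) 0) + d := by linarith
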